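/- Let g : ℝⁿ → ℝ be convex and L-Lipschitz with ∫ exp(−g(x)) dx = 1, let λ > 0, let g^λ be the Moreau–Yosida envelope of g, let Z_λ = ∫ exp(−g^λ(z)) dz, and set π(x) = exp(−g(x)) and π^λ(x) = exp(−g^λ(x))/Z_λ. Then for any nonnegative f : ℝⁿ → ℝ integrable with respect to both π(x)dx and π^λ(x)dx, one has exp(−L²λ/2) ∫ f π dx ≤ ∫ f π^λ dx ≤ exp(L²λ/2) ∫ f π dx. -/

import Mathlib

open MeasureTheory

/-- The Moreau–Yosida envelope of `g` with parameter `lam`. -/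
noncomputable def mye {n : ℕ} (g : EuclideanSpace ℝ (Fin n) → ℝ) (lam : ℝ)
    (x : EuclideanSpace ℝ (Fin n)) : ℝ :=
  ⨅ z : EuclideanSpace ℝ (Fin n), (g z + ‖x - z‖ ^ 2 / (2 * lam))

theorem stmt_10 {n : ℕ} (g : EuclideanSpace ℝ (Fin n) → ℝ) (L lam : ℝ)
    (hconv : ConvexOn ℝ Set.univ g)
    (hLip : ∀ x y, |g x - g y| ≤ L * ‖x - y‖)
    (hlam : 0 < lam)
    (hnorm : ∫ x : EuclideanSpace ℝ (Fin n), Real.exp (-g x) = 1)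
    (f : EuclideanSpace ℝ (Fin n) → ℝ) (hfpos : ∀ x, 0 ≤ f x)
    (hf : Integrable (fun x => f x * Real.exp (-g x)))
    (hflam : Integrable (fun x =>
      f x * (Real.exp (-(mye g lam x)) /
        ∫ z : EuclideanSpace ℝ (Fin n), Real.exp (-(mye g lam z))))) :
    Real.exp (-(L ^ 2 * lam / 2)) * (∫ x, f x * Real.exp (-g x)) ≤
      (∫ x, f x * (Real.exp (-(mye g lam x)) /
        ∫ z : EuclideanSpace ℝ (Fin n), Real.exp (-(mye g lam z)))) ∧
    (∫ x, f x * (Real.exp (-(mye g lam x)) /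
        ∫ z : EuclideanSpace ℝ (Fin n), Real.exp (-(mye g lam z)))) ≤
      Real.exp (L ^ 2 * lam / 2) * ∫ x, f x * Real.exp (-g x) := by
  set c : ℝ := L ^ 2 * lam / 2 with hc
  have hc0 : 0 ≤ c := by positivity
  -- lower bound for the inf
  have hbdd : ∀ x z : EuclideanSpace ℝ (Fin n),
      g x - c ≤ g z + ‖x - z‖ ^ 2 / (2 * lam) := by
    intro x z
    have h1 : g x - g z ≤ L * ‖x - z‖ := (abs_le.mp (hLip x z)).2
    have h2 : 0 ≤ (‖x - z‖ - L * lam) ^ 2 / (2 * lam) := by positivity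
    have h3 : (‖x - z‖ - L * lam) ^ 2 / (2 * lam)
        = ‖x - z‖ ^ 2 / (2 * lam) - L * ‖x - z‖ + c := by
      rw [hc]; field_simp; ring
    linarith
  have hBdd : ∀ x : EuclideanSpace ℝ (Fin n),
      BddBelow (Set.range fun z => g z + ‖x - z‖ ^ 2 / (2 * lam)) := fun x =>
    ⟨g x - c, by rintro w ⟨z, rfl⟩; exact hbdd x z⟩
  have hmye_le : ∀ x, mye g lam x ≤ g x := by
    intro x
    have h := ciInf_le (hBdd x) x
    simpa [mye] using h
  have hmye_ge : ∀ x, g x - c ≤ mye g lam x := fun x => le_ciInf (hbdd x)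
  -- Lipschitz property of the envelope
  have hmylip : ∀ x y : EuclideanSpace ℝ (Fin n),
      mye g lam x ≤ mye g lam y + L * ‖x - y‖ := by
    intro x y
    have key : ∀ z, mye g lam x - L * ‖x - y‖ ≤ g z + ‖y - z‖ ^ 2 / (2 * lam) := by
      intro z
      have h1 : mye g lam x ≤ g (z + x - y) + ‖x - (z + x - y)‖ ^ 2 / (2 * lam) :=
        ciInf_le (hBdd x) _
      have h2 : x - (z + x - y) = y - z := by abel
      have h4 : (z + x - y) - z = x - y := by abel
      have h3 : g (z + x - y) - g z ≤ L * ‖x - y‖ := by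
        have := (abs_le.mp (hLip (z + x - y) z)).2
        rwa [h4] at this
      rw [h2] at h1
      linarith
    have h5 : mye g lam x - L * ‖x - y‖ ≤ mye g lam y := le_ciInf key
    linarith
  have hLnn : L ≤ max L 0 := le_max_left _ _
  have hcontm : Continuous (mye g lam) := by
    have : LipschitzWith (Real.toNNReal (max L 0)) (mye g lam) := by
      apply LipschitzWith.of_dist_le_mul
      intro x y
      rw [Real.dist_eq, Real.coe_toNNReal _ (le_max_right L 0), dist_eq_norm]
      have h1 := hmylip x y
      have h2 := hmylip y x
      rw [show ‖y - x‖ = ‖x - y‖ from norm_sub_rev y x] at h2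
      have hLb : L * ‖x - y‖ ≤ max L 0 * ‖x - y‖ :=
        mul_le_mul_of_nonneg_right hLnn (norm_nonneg _)
      rw [abs_le]
      constructor <;> linarith
    exact this.continuous
  have hcontg : Continuous g := by
    have : LipschitzWith (Real.toNNReal (max L 0)) g := by
      apply LipschitzWith.of_dist_le_mul
      intro x y
      rw [Real.dist_eq, Real.coe_toNNReal _ (le_max_right L 0), dist_eq_norm]
      have hLb : L * ‖x - y‖ ≤ max L 0 * ‖x - y‖ :=
        mul_le_mul_of_nonneg_right hLnn (norm_nonneg _)
      linarith [hLip x y]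
    exact this.continuous
  have hintg : Integrable (fun x : EuclideanSpace ℝ (Fin n) => Real.exp (-g x)) := by
    by_contra h
    rw [integral_undef h] at hnorm
    norm_num at hnorm
  have hle1 : ∀ x, Real.exp (-g x) ≤ Real.exp (-(mye g lam x)) := fun x =>
    Real.exp_le_exp.mpr (by linarith [hmye_le x])
  have hle2 : ∀ x, Real.exp (-(mye g lam x)) ≤ Real.exp c * Real.exp (-g x) := by
    intro x
    rw [← Real.exp_add]
    exact Real.exp_le_exp.mpr (by linarith [hmye_ge x])
  have hintm : Integrable (fun x : EuclideanSpace ℝ (Fin n) =>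
      Real.exp (-(mye g lam x))) := by
    apply (hintg.const_mul (Real.exp c)).mono'
      (Continuous.aestronglyMeasurable (by continuity))
    filter_upwards with x
    rw [Real.norm_eq_abs, abs_of_pos (Real.exp_pos _)]
    exact hle2 x
  set Z : ℝ := ∫ z : EuclideanSpace ℝ (Fin n), Real.exp (-(mye g lam z)) with hZ
  have hZ1 : 1 ≤ Z := by
    rw [hZ, ← hnorm]
    exact integral_mono hintg hintm hle1
  have hZ2 : Z ≤ Real.exp c := by
    calc Z ≤ ∫ x, Real.exp c * Real.exp (-g x) :=
          integral_mono hintm (hintg.const_mul _) hle2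
      _ = Real.exp c := by rw [integral_const_mul, hnorm, mul_one]
  have hZ0 : (0 : ℝ) < Z := lt_of_lt_of_le one_pos hZ1
  constructor
  · rw [← integral_const_mul]
    apply integral_mono (hf.const_mul _) hflam
    intro x
    have h1 : (Real.exp c)⁻¹ ≤ Z⁻¹ := by
      apply inv_anti₀ hZ0 hZ2
    rw [← Real.exp_neg] at h1
    calc Real.exp (-c) * (f x * Real.exp (-g x))
        ≤ Z⁻¹ * (f x * Real.exp (-(mye g lam x))) := by
          apply mul_le_mul h1
            (mul_le_mul_of_nonneg_left (hle1 x) (hfpos x))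
            (mul_nonneg (hfpos x) (Real.exp_pos _).le) (inv_nonneg.mpr hZ0.le)
      _ = f x * (Real.exp (-(mye g lam x)) / Z) := by ring
  · rw [← integral_const_mul]
    apply integral_mono hflam (hf.const_mul _)
    intro x
    calc f x * (Real.exp (-(mye g lam x)) / Z)
        ≤ f x * Real.exp (-(mye g lam x)) :=
          mul_le_mul_of_nonneg_left (div_le_self (Real.exp_pos _).le hZ1) (hfpos x)
      _ ≤ f x * (Real.exp c * Real.exp (-g x)) :=
          mul_le_mul_of_nonneg_left (hle2 x) (hfpos x)
      _ = Real.exp c * (f x * Real.exp (-g x)) := by ring
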